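/- Let H be a real Hilbert space and R > 0, and let B(ρ) = {x ∈ H : ‖x‖ ≤ ρ}. Let F : H → ℝ be Fréchet differentiable on an open set containing B(R), with gradient ∇F Lipschitz continuous on B(R) with some constant D > 0, and strongly convex on B(R) with constant κ > 0, i.e. F(y) − F(x) − ⟨∇F(x), y − x⟩ ≥ κ‖y − x‖² for all x, y ∈ B(R). Assume the unique minimizer x_m of F on B(R) satisfies ‖x_m‖ < R/3, and let x₀ ∈ H with ‖x₀‖ < R/3. Then there exist a sufficiently small step size γ ∈ (0,1) and a number θ = θ(γ) ∈ (0,1) such that the gradient descent iterates x_n = x_{n−1} − γ ∇F(x_{n−1}), n = 1, 2, …, all belong to B(R) and satisfy ‖x_n − x_m‖ ≤ θⁿ ‖x₀ − x_m‖ for every n ≥ 1. -/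

import Mathlib

open InnerProductSpace

/-- Abstract global convergence of the gradient descent method underlying Theorem 5.3:
for a functional `F` with Lipschitz continuous gradient, strongly convex on the ball
`B(R)` of a real Hilbert space, whose minimizer `x_m` on `B(R)` satisfies `‖x_m‖ < R/3`,
and any starting point `x₀` with `‖x₀‖ < R/3`, there exist a small step size
`γ ∈ (0,1)` and `θ = θ(γ) ∈ (0,1)` such that the iterates
`x_n = x_{n−1} − γ ∇F(x_{n−1})` stay in `B(R)` and converge to `x_m` at the rate `θⁿ`. -/
private lemma gd_aux (γ κ D a b p : ℝ) (hγ : 0 < γ) (hκ : 0 < κ)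
    (ha : 0 ≤ a) (hb : 0 ≤ b) (hba : b ≤ D * a) (hD : 0 < D)
    (hγD : γ * D ^ 2 ≤ κ) (hp : p ≥ 2 * κ * a ^ 2) :
    a ^ 2 - 2 * (γ * p) + γ ^ 2 * b ^ 2 ≤ (1 - 3 * γ * κ) * a ^ 2 := by
  have h1 : b ^ 2 ≤ D ^ 2 * a ^ 2 := by nlinarith
  have h2 : γ ^ 2 * b ^ 2 ≤ γ * κ * a ^ 2 := by nlinarith [sq_nonneg a, mul_nonneg hγ.le (sq_nonneg a)]
  have h3 : 2 * (γ * p) ≥ 4 * γ * κ * a ^ 2 := by nlinarith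
  nlinarith

theorem gradient_descent_global_convergence
    {H : Type*} [NormedAddCommGroup H] [InnerProductSpace ℝ H] [CompleteSpace H]
    (R : ℝ) (hR : 0 < R)
    (F : H → ℝ) (U : Set H) (hU : IsOpen U)
    (hKU : Metric.closedBall (0 : H) R ⊆ U)
    (hdiff : ∀ x ∈ U, HasGradientAt F (gradient F x) x)
    (D : ℝ) (hD : 0 < D)
    (hlip : ∀ x ∈ Metric.closedBall (0 : H) R, ∀ y ∈ Metric.closedBall (0 : H) R,
      ‖gradient F x - gradient F y‖ ≤ D * ‖x - y‖)
    (κ : ℝ) (hκ : 0 < κ)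
    (hsconv : ∀ x ∈ Metric.closedBall (0 : H) R, ∀ y ∈ Metric.closedBall (0 : H) R,
      F y - F x - ⟪gradient F x, y - x⟫_ℝ ≥ κ * ‖y - x‖ ^ 2)
    (xm : H) (hxm_mem : xm ∈ Metric.closedBall (0 : H) R)
    (hxm_min : ∀ y ∈ Metric.closedBall (0 : H) R, F xm ≤ F y)
    (hxm_unique : ∀ x' ∈ Metric.closedBall (0 : H) R,
      (∀ y ∈ Metric.closedBall (0 : H) R, F x' ≤ F y) → x' = xm)
    (hxm_small : ‖xm‖ < R / 3)
    (x₀ : H) (hx₀ : ‖x₀‖ < R / 3) :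
    ∃ γ ∈ Set.Ioo (0:ℝ) 1, ∃ θ ∈ Set.Ioo (0:ℝ) 1,
      ∀ x : ℕ → H, x 0 = x₀ →
        (∀ n : ℕ, x (n + 1) = x n - γ • gradient F (x n)) →
        ∀ n : ℕ, 1 ≤ n →
          x n ∈ Metric.closedBall (0 : H) R ∧ ‖x n - xm‖ ≤ θ ^ n * ‖x₀ - xm‖ := by
  -- the gradient vanishes at the interior minimizer
  have hxmR : ‖xm‖ < R := lt_trans hxm_small (by linarith)
  have hmin : IsLocalMin F xm := by
    have h1 : Metric.ball (0 : H) R ∈ nhds xm :=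
      Metric.isOpen_ball.mem_nhds (by simpa [Metric.mem_ball] using hxmR)
    exact Filter.eventually_of_mem h1
      (fun y hy => hxm_min y (Metric.ball_subset_closedBall hy))
  have hgrad0 : gradient F xm = 0 := by
    have hF : HasFDerivAt F ((toDual ℝ H) (gradient F xm)) xm :=
      (hdiff xm (hKU hxm_mem)).hasFDerivAt
    have h0 : (toDual ℝ H) (gradient F xm) = 0 := hmin.hasFDerivAt_eq_zero hF
    have := (toDual ℝ H).injective (h0.trans (map_zero (toDual ℝ H)).symm)
    simpa using this
  -- choose the step size and contraction rate
  set γ : ℝ := min (κ / D ^ 2) (min (1 / 2) (1 / (6 * κ))) with hγdef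
  have hγpos : 0 < γ := by
    apply lt_min (by positivity) (lt_min (by norm_num) (by positivity))
  have hγhalf : γ ≤ 1 / 2 := le_trans (min_le_right _ _) (min_le_left _ _)
  have hγκ : γ * κ ≤ 1 / 6 := by
    have h1 : γ ≤ 1 / (6 * κ) := le_trans (min_le_right _ _) (min_le_right _ _)
    calc γ * κ ≤ (1 / (6 * κ)) * κ := by nlinarith
      _ = 1 / 6 := by field_simp
  have hγD : γ * D ^ 2 ≤ κ := by
    have h1 : γ ≤ κ / D ^ 2 := min_le_left _ _
    calc γ * D ^ 2 ≤ (κ / D ^ 2) * D ^ 2 := by nlinarith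
      _ = κ := by field_simp
  clear_value γ
  set c : ℝ := 1 - 3 * γ * κ with hcdef
  have hcpos : 0 < c := by simp only [hcdef]; nlinarith
  have hclt : c < 1 := by simp only [hcdef]; nlinarith
  set θ : ℝ := Real.sqrt c with hθdef
  have hθpos : 0 < θ := Real.sqrt_pos.mpr hcpos
  have hθlt : θ < 1 := by
    rw [hθdef, show (1:ℝ) = Real.sqrt 1 by simp]
    exact Real.sqrt_lt_sqrt (le_of_lt hcpos) hclt
  have hθsq : θ ^ 2 = c := Real.sq_sqrt (le_of_lt hcpos)
  clear_value θ
  -- key one-step contraction on the ball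
  have hcontr : ∀ z ∈ Metric.closedBall (0 : H) R,
      ‖z - γ • gradient F z - xm‖ ≤ θ * ‖z - xm‖ := by
    intro z hz
    have h1 := hsconv z hz xm hxm_mem
    have h2 := hsconv xm hxm_mem z hz
    rw [hgrad0] at h2
    simp only [inner_zero_left] at h2
    have hnormsym : ‖xm - z‖ = ‖z - xm‖ := by rw [← neg_sub, norm_neg]
    have hmono : ⟪gradient F z, z - xm⟫_ℝ ≥ 2 * κ * ‖z - xm‖ ^ 2 := by
      have : ⟪gradient F z, xm - z⟫_ℝ = - ⟪gradient F z, z - xm⟫_ℝ := by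
        rw [← inner_neg_right, neg_sub]
      rw [hnormsym] at h1
      nlinarith
    have hlipz : ‖gradient F z‖ ≤ D * ‖z - xm‖ := by
      have := hlip z hz xm hxm_mem
      rwa [hgrad0, sub_zero] at this
    have hexp : ‖z - γ • gradient F z - xm‖ ^ 2
        = ‖z - xm‖ ^ 2 - 2 * (γ * ⟪gradient F z, z - xm⟫_ℝ) + γ ^ 2 * ‖gradient F z‖ ^ 2 := by
      have : z - γ • gradient F z - xm = (z - xm) - γ • gradient F z := by abel
      rw [this, norm_sub_sq_real, real_inner_smul_right, norm_smul]
      rw [real_inner_comm]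
      simp only [Real.norm_eq_abs, abs_of_pos hγpos, mul_pow]
    have hbound : ‖z - γ • gradient F z - xm‖ ^ 2 ≤ c * ‖z - xm‖ ^ 2 := by
      rw [hexp, hcdef]
      exact gd_aux γ κ D ‖z - xm‖ ‖gradient F z‖ _ hγpos hκ (norm_nonneg _)
        (norm_nonneg _) hlipz hD hγD hmono
    have hrhs : c * ‖z - xm‖ ^ 2 = (θ * ‖z - xm‖) ^ 2 := by
      rw [mul_pow, hθsq]
    rw [hrhs] at hbound
    have := Real.sqrt_le_sqrt hbound
    rwa [Real.sqrt_sq (norm_nonneg _),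
      Real.sqrt_sq (by positivity)] at this
  -- conclusion
  refine ⟨γ, ⟨hγpos, by linarith⟩, θ, ⟨hθpos, hθlt⟩, ?_⟩
  intro x hx0 hrec
  have hball : ∀ y : H, ‖y - xm‖ ≤ ‖x₀ - xm‖ → y ∈ Metric.closedBall (0 : H) R := by
    intro y hy
    have h5 : ‖x₀ - xm‖ ≤ ‖x₀‖ + ‖xm‖ := norm_sub_le _ _
    have h6 : ‖y‖ ≤ ‖y - xm‖ + ‖xm‖ := by
      calc ‖y‖ = ‖(y - xm) + xm‖ := by congr 1; abel
        _ ≤ ‖y - xm‖ + ‖xm‖ := norm_add_le _ _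
    simp only [Metric.mem_closedBall, dist_zero_right]
    linarith
  have key : ∀ n : ℕ, ‖x n - xm‖ ≤ θ ^ n * ‖x₀ - xm‖ ∧
      x n ∈ Metric.closedBall (0 : H) R := by
    intro n
    induction n with
    | zero =>
      refine ⟨by rw [hx0]; simp, hball _ (by rw [hx0])⟩
    | succ n ih =>
      obtain ⟨ih1, ih2⟩ := ih
      have hstep : ‖x (n + 1) - xm‖ ≤ θ * ‖x n - xm‖ := by
        rw [hrec n]; exact hcontr (x n) ih2
      have h7 : ‖x (n + 1) - xm‖ ≤ θ ^ (n + 1) * ‖x₀ - xm‖ := by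
        calc ‖x (n + 1) - xm‖ ≤ θ * ‖x n - xm‖ := hstep
          _ ≤ θ * (θ ^ n * ‖x₀ - xm‖) := by nlinarith
          _ = θ ^ (n + 1) * ‖x₀ - xm‖ := by ring
      refine ⟨h7, hball _ ?_⟩
      have hθn : θ ^ (n + 1) ≤ 1 :=
        pow_le_one₀ (le_of_lt hθpos) (le_of_lt hθlt)
      have := norm_nonneg (x₀ - xm)
      nlinarith
  intro n _
  exact ⟨(key n).2, (key n).1⟩
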